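/- Let p be a prime and w ∈ V_5. Then #{ ([q],[ℓ]) ∈ P(V_2^*)×P(V_1^*) : (w, q²ℓ) = 0 } = (p²+p+1) + p·#{ [q] ∈ P(V_2^*) : q² is apolar to w }. -/

import Mathlib

open Finset

/-- Multiplication of binary forms encoded by coefficient tuples: a binary form
`∑ i, f i • x^(a-i) * y^i` of degree `a` is encoded as the tuple `f : Fin (a+1) → k`,
and multiplication of forms is convolution of coefficient tuples. -/
def formMul {k : Type*} [CommRing k] {a b : ℕ} (f : Fin (a + 1) → k)
    (g : Fin (b + 1) → k) : Fin (a + b + 1) → k :=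
  fun i => ∑ q : Fin (a + 1) × Fin (b + 1),
    if (q.1 : ℕ) + (q.2 : ℕ) = (i : ℕ) then f q.1 * g q.2 else 0

/-- The pairing `(w, v) = ∑ i, w i * v i` between `V_n` and `V_n^*`. -/
def pair {k : Type*} [CommRing k] {n : ℕ} (w v : Fin (n + 1) → k) : k :=
  ∑ i, w i * v i

section Aux

set_option linter.unnecessarySeqFocus false

variable {K V W : Type*} [Field K] [AddCommGroup V] [Module K V] [AddCommGroup W] [Module K W]

theorem stmt9_mk_eq_mk_of_eq {v v' : V} (h1 : v ≠ 0) (h2 : v' ≠ 0) (h : v = v') :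
    Projectivization.mk K v h1 = Projectivization.mk K v' h2 := by subst h; rfl

theorem stmt9_mk_smul_unit (c : Kˣ) (v : V) (hv : v ≠ 0) (hcv : (c : K) • v ≠ 0) :
    Projectivization.mk K ((c : K) • v) hcv = Projectivization.mk K v hv := by
  rw [Projectivization.mk_eq_mk_iff]
  exact ⟨c, rfl⟩

/-- Free scaling: one-variable version. -/
noncomputable def stmt9ProjEquiv1 (Φ : V → Prop) (hΦ : ∀ (c : Kˣ) v, Φ ((c:K) • v) ↔ Φ v) :
    {x : Projectivization K V // ∃ (v : V) (hv : v ≠ 0), Projectivization.mk K v hv = x ∧ Φ v}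
      × Kˣ ≃ {v : V // v ≠ 0 ∧ Φ v} := by
  have hrep : ∀ x : {x : Projectivization K V //
      ∃ (v : V) (hv : v ≠ 0), Projectivization.mk K v hv = x ∧ Φ v}, Φ (x.1.rep) := by
    rintro ⟨x, v, hv, hmk, hφ⟩
    rw [← Projectivization.mk_rep x, Projectivization.mk_eq_mk_iff] at hmk
    obtain ⟨a, ha⟩ := hmk
    rw [Units.smul_def] at ha
    exact (hΦ a x.rep).mp (ha ▸ hφ)
  refine Equiv.ofBijective (fun y => ⟨(y.2 : K) • y.1.1.rep,
    smul_ne_zero (Units.ne_zero _) y.1.1.rep_nonzero, (hΦ _ _).2 (hrep y.1)⟩) ⟨?_, ?_⟩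
  · rintro ⟨⟨x, hx⟩, c⟩ ⟨⟨x', hx'⟩, c'⟩ h
    rw [Subtype.ext_iff] at h
    simp only at h
    have hx0 : x = x' := by
      rw [← Projectivization.mk_rep x, ← Projectivization.mk_rep x',
        ← stmt9_mk_smul_unit c x.rep x.rep_nonzero (smul_ne_zero (Units.ne_zero _) x.rep_nonzero),
        ← stmt9_mk_smul_unit c' x'.rep x'.rep_nonzero
          (smul_ne_zero (Units.ne_zero _) x'.rep_nonzero)]
      exact stmt9_mk_eq_mk_of_eq _ _ h
    subst hx0
    have : (c : K) = (c' : K) := smul_left_injective K x.rep_nonzero h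
    simp [Prod.ext_iff, Subtype.ext_iff, Units.ext_iff, this]
  · rintro ⟨v, hv, hφ⟩
    have h2 := Projectivization.mk_rep (Projectivization.mk K v hv)
    rw [Projectivization.mk_eq_mk_iff] at h2
    obtain ⟨a, ha⟩ := h2
    refine ⟨⟨⟨Projectivization.mk K v hv, ⟨v, hv, rfl, hφ⟩⟩, a⁻¹⟩, ?_⟩
    apply Subtype.ext
    show (↑a⁻¹ : K) • (Projectivization.mk K v hv).rep = v
    rw [Units.smul_def] at ha
    rw [← ha, smul_smul]
    simp

/-- Free scaling: two-variable version. -/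
noncomputable def stmt9ProjEquiv2 (Φ : V → W → Prop)
    (hΦ : ∀ (c d : Kˣ) (v : V) (u : W), Φ ((c:K) • v) ((d:K) • u) ↔ Φ v u) :
    {x : Projectivization K V × Projectivization K W //
        ∃ (v : V) (u : W) (hv : v ≠ 0) (hu : u ≠ 0),
          Projectivization.mk K v hv = x.1 ∧ Projectivization.mk K u hu = x.2 ∧ Φ v u}
      × (Kˣ × Kˣ) ≃ {v : V × W // v.1 ≠ 0 ∧ v.2 ≠ 0 ∧ Φ v.1 v.2} := by
  have hrep : ∀ x : {x : Projectivization K V × Projectivization K W //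
      ∃ (v : V) (u : W) (hv : v ≠ 0) (hu : u ≠ 0),
        Projectivization.mk K v hv = x.1 ∧ Projectivization.mk K u hu = x.2 ∧ Φ v u},
      Φ (x.1.1.rep) (x.1.2.rep) := by
    rintro ⟨⟨x, y⟩, v, u, hv, hu, hmkv, hmku, hφ⟩
    rw [← Projectivization.mk_rep x, Projectivization.mk_eq_mk_iff] at hmkv
    rw [← Projectivization.mk_rep y, Projectivization.mk_eq_mk_iff] at hmku
    obtain ⟨a, ha⟩ := hmkv
    obtain ⟨b, hb⟩ := hmku
    rw [Units.smul_def] at ha hb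
    exact (hΦ a b x.rep y.rep).mp (by rw [ha, hb]; exact hφ)
  refine Equiv.ofBijective (fun y => ⟨((y.2.1 : K) • y.1.1.1.rep, (y.2.2 : K) • y.1.1.2.rep),
    smul_ne_zero (Units.ne_zero _) y.1.1.1.rep_nonzero,
    smul_ne_zero (Units.ne_zero _) y.1.1.2.rep_nonzero, (hΦ _ _ _ _).2 (hrep y.1)⟩) ⟨?_, ?_⟩
  · rintro ⟨⟨⟨x, y⟩, hx⟩, c, d⟩ ⟨⟨⟨x', y'⟩, hx'⟩, c', d'⟩ h
    rw [Subtype.ext_iff, Prod.ext_iff] at h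
    simp only at h
    obtain ⟨h1, h2⟩ := h
    have hx0 : x = x' := by
      rw [← Projectivization.mk_rep x, ← Projectivization.mk_rep x',
        ← stmt9_mk_smul_unit c x.rep x.rep_nonzero (smul_ne_zero (Units.ne_zero _) x.rep_nonzero),
        ← stmt9_mk_smul_unit c' x'.rep x'.rep_nonzero
          (smul_ne_zero (Units.ne_zero _) x'.rep_nonzero)]
      exact stmt9_mk_eq_mk_of_eq _ _ h1
    have hy0 : y = y' := by
      rw [← Projectivization.mk_rep y, ← Projectivization.mk_rep y',
        ← stmt9_mk_smul_unit d y.rep y.rep_nonzero (smul_ne_zero (Units.ne_zero _) y.rep_nonzero),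
        ← stmt9_mk_smul_unit d' y'.rep y'.rep_nonzero
          (smul_ne_zero (Units.ne_zero _) y'.rep_nonzero)]
      exact stmt9_mk_eq_mk_of_eq _ _ h2
    subst hx0; subst hy0
    have e1 : (c : K) = (c' : K) := smul_left_injective K x.rep_nonzero h1
    have e2 : (d : K) = (d' : K) := smul_left_injective K y.rep_nonzero h2
    simp [Prod.ext_iff, Subtype.ext_iff, Units.ext_iff, e1, e2]
  · rintro ⟨⟨v, u⟩, hv, hu, hφ⟩
    have h2 := Projectivization.mk_rep (Projectivization.mk K v hv)
    have h3 := Projectivization.mk_rep (Projectivization.mk K u hu)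
    rw [Projectivization.mk_eq_mk_iff] at h2 h3
    obtain ⟨a, ha⟩ := h2
    obtain ⟨b, hb⟩ := h3
    refine ⟨⟨⟨(Projectivization.mk K v hv, Projectivization.mk K u hu),
      ⟨v, u, hv, hu, rfl, rfl, hφ⟩⟩, a⁻¹, b⁻¹⟩, ?_⟩
    apply Subtype.ext
    rw [Units.smul_def] at ha hb
    show ((↑a⁻¹ : K) • _, (↑b⁻¹ : K) • _) = (v, u)
    rw [← ha, ← hb, smul_smul, smul_smul]
    simp

variable {k : Type*} [CommRing k]

theorem stmt9_B_lin (w : Fin 6 → k) (q : Fin 3 → k) (l : Fin 2 → k) :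
    pair w (formMul (formMul q q) l)
      = l 0 * pair w (formMul (formMul q q) ![1,0])
        + l 1 * pair w (formMul (formMul q q) ![0,1]) := by
  simp [pair, formMul, Fin.sum_univ_succ, Fintype.sum_prod_type, Fin.isValue]
  ring

theorem stmt9_B_smul (w : Fin 6 → k) (q : Fin 3 → k) (l : Fin 2 → k) (c d : k) :
    pair w (formMul (formMul (c • q) (c • q)) (d • l))
      = c * c * d * pair w (formMul (formMul q q) l) := by
  simp [pair, formMul, Fin.sum_univ_succ, Fintype.sum_prod_type, Fin.isValue]
  ring

variable {p : ℕ} [Fact p.Prime]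

theorem stmt9_card_ne_sub {α : Type*} [Fintype α] [DecidableEq α] (a : α) :
    Nat.card {x : α // x ≠ a} = Fintype.card α - 1 := by
  rw [Nat.card_eq_fintype_card]
  have : Fintype.card {x : α // x ≠ a} = Fintype.card α - Fintype.card {x : α // x = a} :=
    Fintype.card_subtype_compl _
  rw [this, Fintype.card_subtype_eq]

theorem stmt9_line_count (α β : ZMod p) :
    Nat.card {l : Fin 2 → ZMod p // l ≠ 0 ∧ l 0 * α + l 1 * β = 0}
      = if α = 0 ∧ β = 0 then p ^ 2 - 1 else p - 1 := by
  split_ifs with h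
  · obtain ⟨rfl, rfl⟩ := h
    rw [Nat.card_congr (Equiv.subtypeEquivRight (q := fun l : Fin 2 → ZMod p => l ≠ 0)
      (fun l => by simp))]
    rw [stmt9_card_ne_sub (0 : Fin 2 → ZMod p)]
    simp [ZMod.card]
  · rw [not_and_or] at h
    have key : ∀ (α β : ZMod p), α ≠ 0 →
        Nat.card {l : Fin 2 → ZMod p // l ≠ 0 ∧ l 0 * α + l 1 * β = 0} = p - 1 := by
      intro α β hα
      have e : {t : ZMod p // t ≠ 0} ≃ {l : Fin 2 → ZMod p // l ≠ 0 ∧ l 0 * α + l 1 * β = 0} := by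
        refine ⟨fun t => ⟨![-((t:ZMod p) * β), (t : ZMod p) * α], ?_, by simp; ring⟩,
          fun l => ⟨(l : Fin 2 → ZMod p) 1 / α, ?_⟩, ?_, ?_⟩
        · intro hl
          have := congrFun hl 1
          simp [mul_eq_zero, t.2, hα] at this
        · obtain ⟨l, hl, hcond⟩ := l
          simp only
          intro h0
          rw [div_eq_zero_iff] at h0
          have h1 : l 1 = 0 := by tauto
          have h0' : l 0 = 0 := by
            have := hcond
            rw [h1] at this
            simpa [hα] using this
          apply hl
          funext i
          fin_cases i <;> assumption
        · rintro ⟨t, ht⟩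
          ext
          field_simp
          simp
        · rintro ⟨l, hl, hcond⟩
          ext i
          fin_cases i <;> simp <;> field_simp <;> linear_combination -hcond
      rw [← Nat.card_congr e, stmt9_card_ne_sub (0 : ZMod p), ZMod.card]
    rcases h with hα | hβ
    · exact key α β hα
    · have e : {l : Fin 2 → ZMod p // l ≠ 0 ∧ l 0 * β + l 1 * α = 0}
          ≃ {l : Fin 2 → ZMod p // l ≠ 0 ∧ l 0 * α + l 1 * β = 0} := by
        refine ⟨fun l => ⟨![(l : Fin 2 → ZMod p) 1, (l : Fin 2 → ZMod p) 0], ?_, ?_⟩,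
          fun l => ⟨![(l : Fin 2 → ZMod p) 1, (l : Fin 2 → ZMod p) 0], ?_, ?_⟩, ?_, ?_⟩
        · intro h0
          apply l.2.1
          funext i
          fin_cases i
          · exact congrFun h0 1
          · exact congrFun h0 0
        · simp; linear_combination l.2.2
        · intro h0
          apply l.2.1
          funext i
          fin_cases i
          · exact congrFun h0 1
          · exact congrFun h0 0
        · simp; linear_combination l.2.2
        · rintro ⟨l, hl⟩; ext i; fin_cases i <;> simp
        · rintro ⟨l, hl⟩; ext i; fin_cases i <;> simp
      rw [← Nat.card_congr e, key β α hβ]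

theorem stmt9_arith (p A : ℕ) (hp : 2 ≤ p) :
    (p - 1) * (p ^ 3 - 1) + (p ^ 2 - p) * (A * (p - 1))
      = ((p ^ 2 + p + 1) + p * A) * ((p - 1) * (p - 1)) := by
  obtain ⟨m, rfl⟩ : ∃ m, p = m + 1 := ⟨p - 1, by omega⟩
  have h1 : m + 1 - 1 = m := by omega
  have h3 : (m + 1) ^ 3 - 1 = m ^ 3 + 3 * m ^ 2 + 3 * m := by
    have : (m + 1) ^ 3 = m ^ 3 + 3 * m ^ 2 + 3 * m + 1 := by ring
    simp [this]
  have h2 : (m + 1) ^ 2 - (m + 1) = m ^ 2 + m := by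
    have : (m + 1) ^ 2 = m ^ 2 + m + (m + 1) := by ring
    simp [this]
  rw [h1, h3, h2]
  ring

end Aux

/-- Fiber count for the morphism `ψ_{2²,1}` over `[w^⊥]₅`. -/
theorem stmt9 (p : ℕ) [Fact p.Prime] (w : Fin 6 → ZMod p) :
    Nat.card {x : Projectivization (ZMod p) (Fin 3 → ZMod p) ×
        Projectivization (ZMod p) (Fin 2 → ZMod p) //
      ∃ (q : Fin 3 → ZMod p) (l : Fin 2 → ZMod p) (hq : q ≠ 0) (hl : l ≠ 0),
        Projectivization.mk (ZMod p) q hq = x.1 ∧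
        Projectivization.mk (ZMod p) l hl = x.2 ∧
        pair w (formMul (formMul q q) l) = 0} =
    (p ^ 2 + p + 1) + p * Nat.card {x : Projectivization (ZMod p) (Fin 3 → ZMod p) //
      ∃ (q : Fin 3 → ZMod p) (hq : q ≠ 0), Projectivization.mk (ZMod p) q hq = x ∧
        ∀ h : Fin 2 → ZMod p, pair w (formMul (formMul q q) h) = 0} := by
  classical
  have hp2 : 2 ≤ p := (Fact.out : p.Prime).two_le
  set B : (Fin 3 → ZMod p) → (Fin 2 → ZMod p) → ZMod p :=
    fun q l => pair w (formMul (formMul q q) l) with hB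
  have hsm : ∀ (c d : ZMod p) (q : Fin 3 → ZMod p) (l : Fin 2 → ZMod p),
      B (c • q) (d • l) = c * c * d * B q l := fun c d q l => stmt9_B_smul w q l c d
  have hsm1 : ∀ (c : ZMod p) (q : Fin 3 → ZMod p) (l : Fin 2 → ZMod p),
      B (c • q) l = c * c * B q l := by
    intro c q l
    have := hsm c 1 q l
    simpa using this
  have hΦ2 : ∀ (c d : (ZMod p)ˣ) (q : Fin 3 → ZMod p) (l : Fin 2 → ZMod p),
      (B ((c : ZMod p) • q) ((d : ZMod p) • l) = 0) ↔ (B q l = 0) := by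
    intro c d q l
    rw [hsm]
    simp [c.ne_zero, d.ne_zero, mul_eq_zero]
  have hΦ1 : ∀ (c : (ZMod p)ˣ) (q : Fin 3 → ZMod p),
      ((∀ h, B ((c : ZMod p) • q) h = 0) ↔ ∀ h, B q h = 0) := by
    intro c q
    constructor
    · intro hq h
      have := hq h
      rw [hsm1] at this
      simpa [c.ne_zero, mul_eq_zero] using this
    · intro hq h
      rw [hsm1, hq h, mul_zero]
  -- apolarity criterion
  have hap : ∀ q : Fin 3 → ZMod p,
      (∀ h, B q h = 0) ↔ (B q ![1,0] = 0 ∧ B q ![0,1] = 0) := by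
    intro q
    constructor
    · intro hq; exact ⟨hq _, hq _⟩
    · rintro ⟨h1, h2⟩ h
      show pair w (formMul (formMul q q) h) = 0
      rw [stmt9_B_lin w q h,
        show pair w (formMul (formMul q q) ![1,0]) = 0 from h1,
        show pair w (formMul (formMul q q) ![0,1]) = 0 from h2]
      ring
  -- affine pair count
  have haff : Nat.card {v : (Fin 3 → ZMod p) × (Fin 2 → ZMod p) //
        v.1 ≠ 0 ∧ v.2 ≠ 0 ∧ B v.1 v.2 = 0}
      = (p - 1) * (p ^ 3 - 1) + (p ^ 2 - p)
          * (Nat.card {q : Fin 3 → ZMod p // q ≠ 0 ∧ ∀ h, B q h = 0} * 1) := by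
    rw [Nat.card_congr (Equiv.subtypeProdEquivSigmaSubtype
      (fun (a : Fin 3 → ZMod p) (b : Fin 2 → ZMod p) => a ≠ 0 ∧ b ≠ 0 ∧ B a b = 0))]
    rw [Nat.card_eq_fintype_card, Fintype.card_sigma]
    have hfib : ∀ q : Fin 3 → ZMod p,
        Fintype.card {l : Fin 2 → ZMod p // q ≠ 0 ∧ l ≠ 0 ∧ B q l = 0}
          = if q = 0 then 0 else
              ((p - 1) + if (∀ h, B q h = 0) then p ^ 2 - p else 0) := by
      intro q
      have e := Equiv.subtypeEquivRight
        (p := fun l : Fin 2 → ZMod p => q ≠ 0 ∧ l ≠ 0 ∧ B q l = 0)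
        (q := fun l : Fin 2 → ZMod p =>
          q ≠ 0 ∧ (l ≠ 0 ∧ l 0 * (B q ![1,0]) + l 1 * (B q ![0,1]) = 0))
        (fun l => by
          constructor
          · rintro ⟨h0, hl, hb⟩
            refine ⟨h0, hl, ?_⟩
            rw [← stmt9_B_lin w q l]
            exact hb
          · rintro ⟨h0, hl, hb⟩
            refine ⟨h0, hl, ?_⟩
            show pair w (formMul (formMul q q) l) = 0
            rw [stmt9_B_lin w q l]
            exact hb)
      split_ifs with h0 hapq
      · rw [Fintype.card_eq_zero_iff]
        exact ⟨fun l => l.2.1 h0⟩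
      · rw [← Nat.card_eq_fintype_card, Nat.card_congr e,
          Nat.card_congr (Equiv.subtypeEquivRight (q := fun l : Fin 2 → ZMod p =>
            l ≠ 0 ∧ l 0 * (B q ![1,0]) + l 1 * (B q ![0,1]) = 0)
            (fun l => and_iff_right h0)),
          stmt9_line_count, if_pos ((hap q).mp hapq)]
        have h2 : p ≤ p ^ 2 := by nlinarith
        obtain ⟨c, hc⟩ := Nat.exists_eq_add_of_le h2
        rw [hc]
        omega
      · rw [← Nat.card_eq_fintype_card, Nat.card_congr e,
          Nat.card_congr (Equiv.subtypeEquivRight (q := fun l : Fin 2 → ZMod p =>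
            l ≠ 0 ∧ l 0 * (B q ![1,0]) + l 1 * (B q ![0,1]) = 0)
            (fun l => and_iff_right h0)),
          stmt9_line_count, if_neg (fun hc => hapq ((hap q).mpr hc))]
        omega
    calc (∑ q : Fin 3 → ZMod p, Fintype.card {l : Fin 2 → ZMod p // q ≠ 0 ∧ l ≠ 0 ∧ B q l = 0})
        = ∑ q : Fin 3 → ZMod p, if q = 0 then 0 else
            ((p - 1) + if (∀ h, B q h = 0) then p ^ 2 - p else 0) :=
          Finset.sum_congr rfl (fun q _ => hfib q)
      _ = (p - 1) * (p ^ 3 - 1) + (p ^ 2 - p)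
          * (Nat.card {q : Fin 3 → ZMod p // q ≠ 0 ∧ ∀ h, B q h = 0} * 1) := by
          rw [Finset.sum_ite, Finset.sum_const_zero, zero_add, Finset.sum_add_distrib,
            Finset.sum_const, smul_eq_mul]
          have hcf : (Finset.univ.filter (fun q : Fin 3 → ZMod p => ¬ q = 0)).card
              = p ^ 3 - 1 := by
            rw [Finset.filter_not, Finset.card_sdiff_of_subset (Finset.filter_subset _ _)]
            simp [Finset.filter_eq', ZMod.card, Fintype.card_fun]
          have hsum2 : (∑ q ∈ Finset.univ.filter (fun q : Fin 3 → ZMod p => ¬ q = 0),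
              if (∀ h, B q h = 0) then p ^ 2 - p else 0)
              = (p ^ 2 - p) * Nat.card {q : Fin 3 → ZMod p // q ≠ 0 ∧ ∀ h, B q h = 0} := by
            rw [Finset.sum_ite, Finset.sum_const_zero, add_zero, Finset.sum_const,
              smul_eq_mul, Finset.filter_filter]
            have hAA : Nat.card {q : Fin 3 → ZMod p // q ≠ 0 ∧ ∀ h, B q h = 0}
                = (Finset.univ.filter
                    (fun q : Fin 3 → ZMod p => ¬ q = 0 ∧ ∀ h, B q h = 0)).card := by
              rw [Nat.card_eq_fintype_card, Fintype.card_subtype]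
            rw [hAA]
            ring
          rw [hcf, hsum2]
          ring
  -- the two projective/affine comparisons
  have hcard2 := Nat.card_congr
    (stmt9ProjEquiv2 (K := ZMod p) (fun q l => B q l = 0) (fun c d q l => hΦ2 c d q l))
  have hcard1 := Nat.card_congr
    (stmt9ProjEquiv1 (K := ZMod p) (fun q => ∀ h, B q h = 0) (fun c q => hΦ1 c q))
  beta_reduce at hcard2 hcard1
  rw [Nat.card_prod, Nat.card_prod, Nat.card_eq_fintype_card (α := (ZMod p)ˣ),
    ZMod.card_units p] at hcard2
  rw [Nat.card_prod, Nat.card_eq_fintype_card (α := (ZMod p)ˣ), ZMod.card_units p] at hcard1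
  rw [haff] at hcard2
  rw [mul_one] at hcard2
  rw [hB] at hcard2 hcard1
  beta_reduce at hcard2 hcard1
  have hpos : 0 < (p - 1) * (p - 1) := by
    have h1 : 1 ≤ p - 1 := by omega
    nlinarith
  apply Nat.eq_of_mul_eq_mul_right hpos
  rw [hcard2, ← hcard1, stmt9_arith p _ hp2]
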